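/- Up to a rescaling of the independent variable, the system dR/dZ = -tan θ, dθ/dZ = (n-1)(1/cos θ - 1/R) is Hamiltonian: for R > 0 and θ ∈ (-π/2,π/2), one has -tan θ = (1/(R^(n-1) cos θ)) · ∂H/∂θ and (n-1)(1/cos θ - 1/R) = -(1/(R^(n-1) cos θ)) · ∂H/∂R, where H(R,θ) = R^(n-1)(cos θ - (n-1)R/n). -/

import Mathlib

open Real

noncomputable def H (n : ℕ) (R θ : ℝ) : ℝ := R ^ (n - 1) * (Real.cos θ - ((n : ℝ) - 1) * R / n)

theorem hamiltonian_form (n : ℕ) (hn : 2 ≤ n) (R θ : ℝ)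
    (hR : 0 < R) (hθ : θ ∈ Set.Ioo (-(π / 2)) (π / 2)) :
    -Real.tan θ = (1 / (R ^ (n - 1) * Real.cos θ)) * deriv (fun θ' => H n R θ') θ ∧
    ((n : ℝ) - 1) * (1 / Real.cos θ - 1 / R)
      = -(1 / (R ^ (n - 1) * Real.cos θ)) * deriv (fun R' => H n R' θ) R := by
  obtain ⟨m, rfl⟩ : ∃ m, n = m + 2 := ⟨n - 2, by omega⟩
  have hcos : 0 < Real.cos θ := Real.cos_pos_of_mem_Ioo hθ
  have hRne : R ≠ 0 := hR.ne'
  have hcne : Real.cos θ ≠ 0 := hcos.ne'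
  have hnm : (m + 2 : ℕ) - 1 = m + 1 := by omega
  set C : ℝ := ((m + 2 : ℕ) : ℝ) - 1 with hC
  set N : ℝ := ((m + 2 : ℕ) : ℝ) with hN
  constructor
  · have h1 : HasDerivAt (fun θ' => H (m + 2) R θ')
        (R ^ (m + 1) * (-Real.sin θ)) θ := by
      simp only [H, hnm]
      exact ((Real.hasDerivAt_cos θ).sub_const _).const_mul _
    rw [h1.deriv, hnm, Real.tan_eq_sin_div_cos]
    have : R ^ (m + 1) ≠ 0 := pow_ne_zero _ hRne
    field_simp
  · have h2 : HasDerivAt (fun R' : ℝ => Real.cos θ - C * R' / N) (-(C * 1 / N)) R :=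
      (((hasDerivAt_id R).const_mul C).div_const N).const_sub (Real.cos θ)
    have hp : HasDerivAt (fun x : ℝ => x ^ (m + 1)) ((↑(m + 1) : ℝ) * R ^ m) R := by
      simpa using hasDerivAt_pow (m + 1) R
    have h1 : HasDerivAt (fun R' => H (m + 2) R' θ)
        ((↑(m + 1) : ℝ) * R ^ m * (Real.cos θ - C * R / N)
          + R ^ (m + 1) * (-(C * 1 / N))) R := by
      simp only [H, hnm]
      exact hp.mul h2
    rw [h1.deriv, hnm]
    have hNne : N ≠ 0 := by positivity
    have : R ^ (m + 1) ≠ 0 := pow_ne_zero _ hRne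
    simp only [hC, hN]
    push_cast
    field_simp
    ring
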